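/- In any finite simple graph G = (V, E) with nonnegative edge weights w : E → ℝ_{≥0}, there exists a set of edges S ⊆ E such that Σ_{e ∈ S} w(e) ≥ (1/3) · Σ_{e ∈ E} w(e) and, for every vertex v, the number of edges of S incident to v is at most ⌈d_v / 2⌉, where d_v is the degree of v in G. -/

import Mathlib

open Finset

/-- A finite simple graph presented via an abstract edge type: each edge has a
set of exactly two endpoints, and distinct edges have distinct endpoint sets. -/
structure GraphEdges (V E : Type) where
  ends : E → Finset V
  card_ends : ∀ e, (ends e).card = 2
  ends_injective : Function.Injective ends

namespace HeavyAux

variable {V E : Type} [DecidableEq V] [Fintype E] [DecidableEq E]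
  (G : GraphEdges V E) (w : E → ℝ)

/-- degree of `v` in the edge set `S`. -/
def deg (S : Finset E) (v : V) : ℕ := (S.filter (fun e => v ∈ G.ends e)).card

/-- degree cap at `v`: `⌈d_v/2⌉`. -/
def cap (v : V) : ℕ := ((Finset.univ.filter (fun e : E => v ∈ G.ends e)).card + 1) / 2

def Feas (S : Finset E) : Prop := ∀ v : V, deg G S v ≤ cap G v

/-- greedy: add each edge of the list if it keeps all degree caps. -/
def greedy (S : Finset E) : List E → Finset E
  | [] => S
  | e :: l => if ∀ v ∈ G.ends e, deg G S v + 1 ≤ cap G v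
      then greedy (insert e S) l else greedy S l

lemma deg_mono {S T : Finset E} (h : S ⊆ T) (v : V) : deg G S v ≤ deg G T v :=
  Finset.card_le_card (Finset.filter_subset_filter _ h)

lemma deg_insert_le (S : Finset E) (e : E) (v : V) :
    deg G (insert e S) v ≤ deg G S v + 1 := by
  unfold deg
  by_cases hv : v ∈ G.ends e
  · rw [Finset.filter_insert, if_pos hv]
    exact Finset.card_insert_le _ _
  · rw [Finset.filter_insert, if_neg hv]
    omega

lemma deg_insert_not (S : Finset E) {e : E} {v : V} (hv : v ∉ G.ends e) :
    deg G (insert e S) v = deg G S v := by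
  unfold deg
  rw [Finset.filter_insert, if_neg hv]

lemma subset_greedy : ∀ (l : List E) (S : Finset E), S ⊆ greedy G S l
  | [], S => by rw [greedy]
  | e :: l, S => by
    rw [greedy]
    split_ifs with h
    · exact (Finset.subset_insert e S).trans (subset_greedy l (insert e S))
    · exact subset_greedy l S

lemma greedy_spec : ∀ (l : List E) (S : Finset E),
    Feas G S → (∀ f ∈ S, ∀ e ∈ l, w e ≤ w f) →
    l.Pairwise (fun a b => w b ≤ w a) →
    Feas G (greedy G S l) ∧
    ∀ e ∈ l, e ∉ greedy G S l →
      ∃ v ∈ G.ends e, deg G (greedy G S l) v = cap G v ∧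
        ∀ f ∈ greedy G S l, v ∈ G.ends f → w e ≤ w f
  | [], S, hF, _, _ => ⟨by rw [greedy]; exact hF, by simp⟩
  | e :: l, S, hF, hW, hSorted => by
    rw [greedy]
    split_ifs with h
    · -- accepted
      have hF' : Feas G (insert e S) := by
        intro v
        by_cases hv : v ∈ G.ends e
        · exact le_trans (deg_insert_le G S e v) (h v hv)
        · rw [deg_insert_not G S hv]; exact hF v
      have hW' : ∀ f ∈ insert e S, ∀ e' ∈ l, w e' ≤ w f := by
        intro f hf e' he'
        rcases Finset.mem_insert.mp hf with rfl | hf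
        · exact (List.pairwise_cons.mp hSorted).1 e' he'
        · exact hW f hf e' (List.mem_cons_of_mem _ he')
      obtain ⟨ihF, ihR⟩ := greedy_spec l (insert e S) hF' hW'
        (List.pairwise_cons.mp hSorted).2
      refine ⟨ihF, ?_⟩
      intro e' he' hne
      rcases List.mem_cons.mp he' with rfl | he'
      · exact absurd (subset_greedy G l _ (Finset.mem_insert_self _ _)) hne
      · exact ihR e' he' hne
    · -- rejected
      have hW' : ∀ f ∈ S, ∀ e' ∈ l, w e' ≤ w f := fun f hf e' he' =>
        hW f hf e' (List.mem_cons_of_mem _ he')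
      obtain ⟨ihF, ihR⟩ := greedy_spec l S hF hW' (List.pairwise_cons.mp hSorted).2
      refine ⟨ihF, ?_⟩
      intro e' he' hne
      rcases List.mem_cons.mp he' with rfl | he'
      · push_neg at h
        obtain ⟨v, hv, hcap⟩ := h
        have hSeq : deg G S v = cap G v := le_antisymm (hF v) (by omega)
        set T := greedy G S l with hT
        have hsub : S.filter (fun f => v ∈ G.ends f) ⊆ T.filter (fun f => v ∈ G.ends f) :=
          Finset.filter_subset_filter _ (subset_greedy G l S)
        have heq : S.filter (fun f => v ∈ G.ends f) = T.filter (fun f => v ∈ G.ends f) := by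
          apply Finset.eq_of_subset_of_card_le hsub
          calc (T.filter (fun f => v ∈ G.ends f)).card = deg G T v := rfl
            _ ≤ cap G v := ihF v
            _ = (S.filter (fun f => v ∈ G.ends f)).card := hSeq.symm
        refine ⟨v, hv, ?_, ?_⟩
        · unfold deg
          rw [← heq]
          exact hSeq
        · intro f hf hvf
          have : f ∈ S.filter (fun f => v ∈ G.ends f) := by
            rw [heq]; exact Finset.mem_filter.mpr ⟨hf, hvf⟩
          exact hW f (Finset.mem_filter.mp this).1 e' List.mem_cons_self
      · exact ihR e' he' hne

end HeavyAux

/-- In any finite simple graph with nonnegative edge weights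
there is a set `S` of edges carrying at least a third of the total weight in
which every vertex `v` has degree at most `⌈d_v / 2⌉`. -/
theorem exists_heavy_half_degree_subgraph
    {V E : Type} [DecidableEq V] [Fintype E] [DecidableEq E]
    (G : GraphEdges V E) (w : E → ℝ) (hw : ∀ e, 0 ≤ w e) :
    ∃ S : Finset E,
      (1 / 3 : ℝ) * ∑ e : E, w e ≤ ∑ e ∈ S, w e ∧
      ∀ v : V, (S.filter (fun e => v ∈ G.ends e)).card ≤
        ((Finset.univ.filter (fun e : E => v ∈ G.ends e)).card + 1) / 2 := by
  classical
  open HeavyAux in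
  -- sorted list of all edges, decreasing weight
  set le : E → E → Bool := fun a b => decide (w b ≤ w a) with hle
  set l : List E := (Finset.univ.toList (α := E)).mergeSort le with hl
  have hsorted : l.Pairwise (fun a b => w b ≤ w a) := by
    have := List.pairwise_mergeSort (le := le)
      (fun a b c hab hbc => by
        simp only [hle, decide_eq_true_eq] at *; exact le_trans hbc hab)
      (fun a b => by
        simp only [hle, Bool.or_eq_true, decide_eq_true_eq]; exact le_total (w b) (w a))
      (Finset.univ.toList (α := E))
    exact this.imp (fun h => by simpa [hle] using h)
  have hmem : ∀ e : E, e ∈ l := fun e => by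
    rw [hl, List.mem_mergeSort]; exact Finset.mem_toList.mpr (Finset.mem_univ e)
  have hFeas0 : Feas G (∅ : Finset E) := by
    intro v; unfold deg; simp
  obtain ⟨hFeas, hRej⟩ := greedy_spec G w l ∅ hFeas0 (by simp) hsorted
  set T : Finset E := greedy G ∅ l with hT
  refine ⟨T, ?_, hFeas⟩
  -- the charging argument
  have hRej' : ∀ e ∉ T, ∃ v ∈ G.ends e, deg G T v = cap G v ∧
      ∀ f ∈ T, v ∈ G.ends f → w e ≤ w f := fun e he => hRej e (hmem e) he
  have hends_ne : ∀ e : E, (G.ends e).Nonempty := fun e =>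
    Finset.card_pos.mp (by rw [G.card_ends]; norm_num)
  set φ : E → V := fun e =>
    if h : ∃ v ∈ G.ends e, deg G T v = cap G v ∧ ∀ f ∈ T, v ∈ G.ends f → w e ≤ w f
    then h.choose else (hends_ne e).choose with hφ
  have hφ_spec : ∀ e ∉ T, φ e ∈ G.ends e ∧ deg G T (φ e) = cap G (φ e) ∧
      ∀ f ∈ T, φ e ∈ G.ends f → w e ≤ w f := by
    intro e he
    have h := hRej' e he
    rw [hφ]
    simp only [dif_pos h]
    exact h.choose_spec
  set B : Finset V := Finset.univ.biUnion (fun e : E => G.ends e) with hB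
  have hendsB : ∀ e : E, G.ends e ⊆ B := fun e v hv =>
    Finset.mem_biUnion.mpr ⟨e, Finset.mem_univ e, hv⟩
  have h1 : ∑ v ∈ B, ∑ e ∈ Tᶜ.filter (fun e => φ e = v), w e = ∑ e ∈ Tᶜ, w e :=
    Finset.sum_fiberwise_of_maps_to
      (fun e he => hendsB e (hφ_spec e (Finset.mem_compl.mp he)).1) w
  -- per-vertex bound
  have h2 : ∀ v ∈ B, ∑ e ∈ Tᶜ.filter (fun e => φ e = v), w e ≤
      ∑ e ∈ T.filter (fun e => v ∈ G.ends e), w e := by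
    intro v _
    set Rv := Tᶜ.filter (fun e => φ e = v) with hRv
    rcases Rv.eq_empty_or_nonempty with hemp | ⟨e0, he0⟩
    · rw [hemp, Finset.sum_empty]
      exact Finset.sum_nonneg (fun e _ => hw e)
    · have he0T : e0 ∉ T := Finset.mem_compl.mp (Finset.mem_filter.mp he0).1
      have he0φ : φ e0 = v := (Finset.mem_filter.mp he0).2
      obtain ⟨hv0, hdeg0, _⟩ := hφ_spec e0 he0T
      rw [he0φ] at hv0 hdeg0
      set Tv := T.filter (fun e => v ∈ G.ends e) with hTv
      set Ev := Finset.univ.filter (fun e : E => v ∈ G.ends e) with hEv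
      have hTvcard : Tv.card = (Ev.card + 1) / 2 := hdeg0
      have hEvpos : 1 ≤ Ev.card :=
        Finset.card_pos.mpr ⟨e0, Finset.mem_filter.mpr ⟨Finset.mem_univ _, hv0⟩⟩
      have hTvne : Tv.Nonempty := Finset.card_pos.mp (by omega)
      obtain ⟨f0, hf0, hm⟩ := Finset.exists_mem_eq_inf' hTvne w
      have hm0 : 0 ≤ Tv.inf' hTvne w := hm ▸ hw f0
      have hmemR : ∀ e ∈ Rv, e ∉ T ∧ v ∈ G.ends e ∧
          ∀ f ∈ T, v ∈ G.ends f → w e ≤ w f := by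
        intro e he
        have heT : e ∉ T := Finset.mem_compl.mp (Finset.mem_filter.mp he).1
        have heφ : φ e = v := (Finset.mem_filter.mp he).2
        obtain ⟨h1', h2', h3'⟩ := hφ_spec e heT
        rw [heφ] at h1' h3'
        exact ⟨heT, h1', h3'⟩
      have hcard : Rv.card ≤ Tv.card := by
        have hsub : Rv ⊆ Ev \ Tv := by
          intro e he
          obtain ⟨heT, hev, _⟩ := hmemR e he
          refine Finset.mem_sdiff.mpr ⟨Finset.mem_filter.mpr ⟨Finset.mem_univ _, hev⟩, ?_⟩
          exact fun hc => heT (Finset.mem_filter.mp hc).1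
        have hTvEv : Tv ⊆ Ev := fun e he =>
          Finset.mem_filter.mpr ⟨Finset.mem_univ _, (Finset.mem_filter.mp he).2⟩
        have h' := Finset.card_le_card hsub
        rw [Finset.card_sdiff_of_subset hTvEv] at h'
        omega
      calc ∑ e ∈ Rv, w e ≤ Rv.card • Tv.inf' hTvne w := by
            apply Finset.sum_le_card_nsmul
            intro e he
            rw [hm]
            exact (hmemR e he).2.2 f0 (Finset.mem_filter.mp hf0).1 (Finset.mem_filter.mp hf0).2
        _ ≤ Tv.card • Tv.inf' hTvne w := by
            simp only [nsmul_eq_mul]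
            exact mul_le_mul_of_nonneg_right (by exact_mod_cast hcard) hm0
        _ ≤ ∑ e ∈ Tv, w e :=
            Finset.card_nsmul_le_sum _ _ _ (fun f hf => Finset.inf'_le w hf)
  have h3 : ∑ v ∈ B, ∑ e ∈ T.filter (fun e => v ∈ G.ends e), w e = 2 * ∑ e ∈ T, w e := by
    calc ∑ v ∈ B, ∑ e ∈ T.filter (fun e => v ∈ G.ends e), w e
        = ∑ v ∈ B, ∑ e ∈ T, if v ∈ G.ends e then w e else 0 := by
          refine Finset.sum_congr rfl (fun v _ => ?_)
          rw [Finset.sum_filter]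
      _ = ∑ e ∈ T, ∑ v ∈ B, if v ∈ G.ends e then w e else 0 := Finset.sum_comm
      _ = ∑ e ∈ T, 2 * w e := by
          refine Finset.sum_congr rfl (fun e _ => ?_)
          rw [Finset.sum_ite_mem, Finset.inter_eq_right.mpr (hendsB e),
            Finset.sum_const, G.card_ends, nsmul_eq_mul]
          norm_num
      _ = 2 * ∑ e ∈ T, w e := by rw [Finset.mul_sum]
  have hcompl : ∑ e ∈ Tᶜ, w e ≤ 2 * ∑ e ∈ T, w e := by
    rw [← h1, ← h3]
    exact Finset.sum_le_sum h2
  have htot : ∑ e : E, w e = ∑ e ∈ T, w e + ∑ e ∈ Tᶜ, w e :=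
    (Finset.sum_add_sum_compl T w).symm
  linarith
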